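/- Let K_{1,4} be the star with 4 leaves and let K be a CRG with only black vertices such that K_{1,4} does not map to K (i.e., there is no φ: V(K_{1,4}) → V(K) sending edges into {black, gray} edge colors or equal black vertices, and non-edges into {white, gray} colors or equal white vertices). Then every vertex of K is incident to at most two gray edges. -/
import Mathlib


open Finset

inductive EColor | white | black | gray
deriving DecidableEq

/-- The `p`-weight of an edge color: `p` for white, `1-p` for black, `0` for gray. -/
def wval (p : ℝ) : EColor → ℝ
  | .white => p
  | .black => 1 - p
  | .gray => 0

/-- The matrix `M_K(p)` of a CRG given by vertex colors `vb` (`true` = black)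
and edge colors `ec`. -/
def Mmat {V : Type*} [DecidableEq V] (vb : V → Bool) (ec : V → V → EColor) (p : ℝ)
    (x y : V) : ℝ :=
  if x = y then (if vb x then 1 - p else p) else wval p (ec x y)

/-- `μ` is a probability mass. -/
def IsProb {V : Type*} [Fintype V] (μ : V → ℝ) : Prop :=
  (∀ x, 0 ≤ μ x) ∧ ∑ x, μ x = 1

/-- The quadratic form `⟨μ, M_K(p) μ⟩`. -/
def QF {V : Type*} [Fintype V] [DecidableEq V] (vb : V → Bool) (ec : V → V → EColor)
    (p : ℝ) (μ : V → ℝ) : ℝ :=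
  ∑ x, ∑ y, μ x * Mmat vb ec p x y * μ y

/-- `g` is the minimum of the quadratic form over probability masses, i.e. `g = g_K(p)`. -/
def gIs {V : Type*} [Fintype V] [DecidableEq V] (vb : V → Bool) (ec : V → V → EColor)
    (p g : ℝ) : Prop :=
  IsLeast {t | ∃ μ : V → ℝ, IsProb μ ∧ t = QF vb ec p μ} g

/-- The weighted gray-degree `d_G(u) = ∑_{v : uv gray} μ(v)`. -/
def grayDeg {V : Type*} [Fintype V] [DecidableEq V] (ec : V → V → EColor) (μ : V → ℝ)
    (u : V) : ℝ :=
  ∑ v ∈ Finset.univ.filter (fun v => v ≠ u ∧ ec u v = EColor.gray), μ v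

/-- `F ↦ K`: a graph maps to a CRG. -/
def MapsToCRG {A V : Type*} (F : SimpleGraph A) (vb : V → Bool)
    (ec : V → V → EColor) : Prop :=
  ∃ φ : A → V,
    (∀ a b, F.Adj a b →
      (φ a = φ b ∧ vb (φ a) = true) ∨
      (φ a ≠ φ b ∧ (ec (φ a) (φ b) = EColor.black ∨ ec (φ a) (φ b) = EColor.gray))) ∧
    (∀ a b, a ≠ b → ¬ F.Adj a b →
      (φ a = φ b ∧ vb (φ a) = false) ∨
      (φ a ≠ φ b ∧ (ec (φ a) (φ b) = EColor.white ∨ ec (φ a) (φ b) = EColor.gray)))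

/-- The star `K_{1,4}` on `Fin 5`, with center `0`. -/
def star14 : SimpleGraph (Fin 5) := SimpleGraph.fromRel (fun a _ => a = 0)

/-- if `K` is a CRG with only black vertices and only white or gray edges
(0-core), and `K_{1,4} ̸↦ K`, then every vertex of `K` is incident to at most two gray
edges. -/
theorem stmt15 {V : Type*} [Fintype V] [DecidableEq V]
    (vb : V → Bool) (ec : V → V → EColor) (hsymm : ∀ a b, ec a b = ec b a)
    (hblack : ∀ x, vb x = true)
    (hnb : ∀ x y, x ≠ y → ec x y ≠ EColor.black)
    (hstar : ¬ MapsToCRG star14 vb ec) :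
    ∀ v, ((Finset.univ.filter fun u => u ≠ v ∧ ec v u = EColor.gray)).card ≤ 2 := by
  intro v
  by_contra hcard
  push_neg at hcard
  rw [Finset.two_lt_card] at hcard
  obtain ⟨a, ha, b, hb, c, hc, hab, hac, hbc⟩ := hcard
  simp only [Finset.mem_filter] at ha hb hc
  obtain ⟨-, hav, hga⟩ := ha
  obtain ⟨-, hbv, hgb⟩ := hb
  obtain ⟨-, hcv, hgc⟩ := hc
  apply hstar
  refine ⟨![v, a, b, c, v], ?_, ?_⟩
  · intro i j hadj
    have h : i ≠ j ∧ (i = 0 ∨ j = 0) := by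
      simpa [star14, SimpleGraph.fromRel_adj, or_comm] using hadj
    obtain ⟨hij, h0⟩ := h
    fin_cases i <;> fin_cases j <;>
      simp_all [Matrix.cons_val_zero, Matrix.cons_val_one, hsymm a v, hsymm b v, hsymm c v,
        Ne.symm hav, Ne.symm hbv, Ne.symm hcv, hav, hbv, hcv]
  · intro i j hij hnadj
    simp only [star14, SimpleGraph.fromRel_adj, not_and, not_or] at hnadj
    have h0 := hnadj hij
    have key : ∀ x y : V, x ≠ y → ec x y = EColor.white ∨ ec x y = EColor.gray := by
      intro x y hxy
      have := hnb x y hxy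
      cases hxy' : ec x y <;> simp_all
    fin_cases i <;> fin_cases j <;>
      simp_all [Ne.symm hab, Ne.symm hac, Ne.symm hbc, Ne.symm hav, Ne.symm hbv, Ne.symm hcv,
        hab, hac, hbc, hav, hbv, hcv,
        key a b hab, key a c hac, key b c hbc, key a v hav, key b v hbv, key c v hcv,
        key b a (Ne.symm hab), key c a (Ne.symm hac), key c b (Ne.symm hbc),
        key v a (Ne.symm hav), key v b (Ne.symm hbv), key v c (Ne.symm hcv)]
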